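/- arXiv:2307.01790 — 3 statements merged into one kernel-verified Lean document; each statement's English description precedes it below -/
import Mathlib

section
/- Let A be an n×n and B an m×m complex matrix, and suppose A = U·|A| and B = V·|B| for some matrices U and V (e.g. the partial isometries in the polar decompositions of A and B). Then A ⊗ₖ B = (U ⊗ₖ V)·|A ⊗ₖ B|, i.e. U ⊗ₖ V together with |A| ⊗ₖ |B| realizes a polar factorization of A ⊗ₖ B. -/
open Matrix Kronecker ComplexOrder

/-- The `r`-th power of a complex square matrix, obtained via the (real) continuous
functional calculus applied to `t ↦ t ^ r` (real `rpow`, so that `0 ^ r = 0` for `r ≠ 0`). -/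
noncomputable def matRpow {k : Type*} [Fintype k] [DecidableEq k]
    (A : Matrix k k ℂ) (r : ℝ) : Matrix k k ℂ :=
  cfc (fun x : ℝ => x ^ r) A

/-- The absolute value `|A| := (Aᴴ · A)^{1/2}` of a complex square matrix, where the square
root is taken via the continuous functional calculus. -/
noncomputable def matAbs {k : Type*} [Fintype k] [DecidableEq k]
    (A : Matrix k k ℂ) : Matrix k k ℂ :=
  matRpow (Aᴴ * A) (1 / 2 : ℝ)

lemma conjTranspose_kronecker {n m : Type*} [Fintype n] [Fintype m] (A : Matrix n n ℂ)
    (B : Matrix m m ℂ) : (A ⊗ₖ B)ᴴ = Aᴴ ⊗ₖ Bᴴ := by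
  ext ⟨i, j⟩ ⟨k, l⟩
  simp [conjTranspose_apply, kroneckerMap_apply]

lemma posSemidef_kronecker {n m : Type*} [Fintype n] [Fintype m] [DecidableEq n]
    [DecidableEq m] {A : Matrix n n ℂ}
    {B : Matrix m m ℂ} (hA : A.PosSemidef) (hB : B.PosSemidef) :
    (A ⊗ₖ B).PosSemidef := by
  exact hA.kronecker hB

open scoped MatrixOrder in
lemma matRpow_half_eq_sqrt {k : Type*} [Fintype k] [DecidableEq k] {M : Matrix k k ℂ}
    (hM : M.PosSemidef) :
    matRpow M (1 / 2 : ℝ) = CFC.sqrt M := by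
  rw [matRpow, CFC.sqrt_eq_real_sqrt M (nonneg_iff_posSemidef.mpr hM)]
  rw [cfcₙ_eq_cfc]
  refine cfc_congr (a := M) fun x _ => ?_
  simp [Real.sqrt_eq_rpow, one_div]

open scoped MatrixOrder in
lemma matAbs_kronecker {n m : ℕ} (A : Matrix (Fin n) (Fin n) ℂ)
    (B : Matrix (Fin m) (Fin m) ℂ) :
    matAbs (A ⊗ₖ B) = matAbs A ⊗ₖ matAbs B := by
  have hA : (Aᴴ * A).PosSemidef := posSemidef_conjTranspose_mul_self A
  have hB : (Bᴴ * B).PosSemidef := posSemidef_conjTranspose_mul_self B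
  have hK : ((A ⊗ₖ B)ᴴ * (A ⊗ₖ B)).PosSemidef := posSemidef_conjTranspose_mul_self _
  rw [matAbs, matAbs, matAbs, matRpow_half_eq_sqrt hA, matRpow_half_eq_sqrt hB,
    matRpow_half_eq_sqrt hK]
  have hkr : (CFC.sqrt (Aᴴ * A) ⊗ₖ CFC.sqrt (Bᴴ * B)).PosSemidef :=
    posSemidef_kronecker (nonneg_iff_posSemidef.mp (CFC.sqrt_nonneg _))
      (nonneg_iff_posSemidef.mp (CFC.sqrt_nonneg _))
  have hsq : (CFC.sqrt (Aᴴ * A) ⊗ₖ CFC.sqrt (Bᴴ * B)) * (CFC.sqrt (Aᴴ * A) ⊗ₖ CFC.sqrt (Bᴴ * B))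
      = (A ⊗ₖ B)ᴴ * (A ⊗ₖ B) := by
    rw [← mul_kronecker_mul, CFC.sqrt_mul_sqrt_self _ (nonneg_iff_posSemidef.mpr hA),
      CFC.sqrt_mul_sqrt_self _ (nonneg_iff_posSemidef.mpr hB),
      _root_.conjTranspose_kronecker, ← mul_kronecker_mul]
  exact (CFC.sqrt_unique hsq (nonneg_iff_posSemidef.mpr hkr))

/-- If `A = U·|A|` and `B = V·|B|` then `A ⊗ₖ B = (U ⊗ₖ V)·|A ⊗ₖ B|`, i.e. `U ⊗ₖ V`
together with `|A| ⊗ₖ |B|` realizes a polar factorization of `A ⊗ₖ B`. -/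
theorem kronecker_polar_factorization {n m : ℕ}
    (A U : Matrix (Fin n) (Fin n) ℂ) (B V : Matrix (Fin m) (Fin m) ℂ)
    (hA : A = U * matAbs A) (hB : B = V * matAbs B) :
    A ⊗ₖ B = (U ⊗ₖ V) * matAbs (A ⊗ₖ B) := by
  rw [matAbs_kronecker, ← mul_kronecker_mul, ← hA, ← hB]
end

section
/- Let σ₁ be an n×n and σ₂ an m×m complex positive definite matrix, let ρ₁, ρ₂ be positive semidefinite matrices of matching sizes, and let α > 0 with α ≠ 1 and z > 0 be real numbers. Then trace[(((σ₁ ⊗ₖ σ₂)^{(1−α)/(2z)}) · ((ρ₁ ⊗ₖ ρ₂)^{α/z}) · ((σ₁ ⊗ₖ σ₂)^{(1−α)/(2z)}))^z] = trace[((σ₁^{(1−α)/(2z)}) · (ρ₁^{α/z}) · (σ₁^{(1−α)/(2z)}))^z] · trace[((σ₂^{(1−α)/(2z)}) · (ρ₂^{α/z}) · (σ₂^{(1−α)/(2z)}))^z]. -/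
open Matrix Kronecker ComplexOrder

namespace RenyiAux

variable {k : Type*} [Fintype k] [DecidableEq k]

lemma spectrum_conj_diag (u : Matrix.unitaryGroup k ℂ) (d : k → ℝ) :
    spectrum ℝ ((u : Matrix k k ℂ) * diagonal (RCLike.ofReal ∘ d) * (star u : Matrix k k ℂ))
      = Set.range d := by
  ext x
  conv_lhs => rw [Unitary.spectrum_star_right_conjugate, ← spectrum.algebraMap_mem_iff ℂ,
    spectrum_diagonal, RCLike.algebraMap_eq_ofReal]
  simp [Function.comp]

lemma isSelfAdjoint_conj_diag (u : Matrix.unitaryGroup k ℂ) (d : k → ℝ) :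
    IsSelfAdjoint ((u : Matrix k k ℂ) * diagonal (RCLike.ofReal ∘ d) * (star u : Matrix k k ℂ)) := by
  have hd : star (diagonal (RCLike.ofReal ∘ d) : Matrix k k ℂ) = diagonal (RCLike.ofReal ∘ d) := by
    rw [star_eq_conjTranspose, diagonal_conjTranspose]
    congr 1
    funext i
    simp [Pi.star_def, Function.comp_def]
  rw [_root_.IsSelfAdjoint, StarMul.star_mul, StarMul.star_mul, star_star, hd, mul_assoc]

lemma cfc_conj_diag (u : Matrix.unitaryGroup k ℂ) (d : k → ℝ) (f : ℝ → ℝ) :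
    cfc f ((u : Matrix k k ℂ) * diagonal (RCLike.ofReal ∘ d) * (star u : Matrix k k ℂ))
      = (u : Matrix k k ℂ) * diagonal (RCLike.ofReal ∘ f ∘ d) * (star u : Matrix k k ℂ) := by
  set a : Matrix k k ℂ := (u : Matrix k k ℂ) * diagonal (RCLike.ofReal ∘ d)
      * (star u : Matrix k k ℂ) with ha_def
  have ha : _root_.IsSelfAdjoint a := isSelfAdjoint_conj_diag u d
  have hmem : ∀ i, d i ∈ spectrum ℝ a := by
    intro i
    rw [ha_def, spectrum_conj_diag]
    exact ⟨i, rfl⟩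
  let φ : C(spectrum ℝ a, ℝ) →⋆ₐ[ℝ] Matrix k k ℂ :=
  { toFun := fun g => (u : Matrix k k ℂ) *
      diagonal (RCLike.ofReal ∘ g ∘ (fun i ↦ (⟨d i, hmem i⟩ : spectrum ℝ a)))
      * (star u : Matrix k k ℂ)
    map_one' := by simp [Pi.one_def (M := fun _ : k ↦ ℂ)]
    map_mul' := fun f g => by
      have key {a b c d e f : Matrix k k ℂ} :
          (a * b * c) * (d * e * f) = a * (b * (c * d) * e) * f := by
        simp only [mul_assoc]
      simp only [key, ContinuousMap.coe_mul, SetLike.coe_mem, Unitary.star_mul_self_of_mem,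
        mul_one, diagonal_mul_diagonal, Function.comp_apply]
      congr! with i
      simp
    map_zero' := by simp [Pi.zero_def (M := fun _ : k ↦ ℂ)]
    map_add' := fun f g => by
      simp only [ContinuousMap.coe_add, ← add_mul, ← mul_add, diagonal_add, Function.comp_apply]
      congr! with i
      simp
    commutes' := fun r => by
      simp only [Function.comp_def, algebraMap_apply, smul_eq_mul, mul_one]
      rw [← mul_one (algebraMap _ _ _), ← Unitary.coe_mul_star_self u,
        ← Algebra.left_comm, Unitary.coe_star, mul_assoc]
      congr!
    map_star' := fun f => by
      simp only [star_trivial, StarMul.star_mul, star_star, star_eq_conjTranspose (diagonal _),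
        diagonal_conjTranspose, mul_assoc]
      congr!
      ext
      simp }
  have hFD : FiniteDimensional ℝ C(spectrum ℝ a, ℝ) :=
    FiniteDimensional.of_injective (ContinuousMap.coeFnLinearMap ℝ (M := ℝ)) DFunLike.coe_injective
  have hφc : Continuous φ := by
    exact LinearMap.continuous_of_finiteDimensional (φ.toAlgHom.toLinearMap)
  have hφ1 : φ (ContinuousMap.restrict (spectrum ℝ a) (ContinuousMap.id ℝ)) = a := by
    conv_rhs => rw [ha_def]
    congr!
  have key := cfcHom_eq_of_continuous_of_map_id ha φ hφc hφ1
  rw [cfc_apply f a ha (by rw [continuousOn_iff_continuous_restrict]; fun_prop), key]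
  show (u : Matrix k k ℂ) * diagonal _ * (star u : Matrix k k ℂ) = _
  congr!

variable {l : Type*} [Fintype l] [DecidableEq l]

lemma conjTranspose_kron (A : Matrix k k ℂ) (B : Matrix l l ℂ) :
    (A ⊗ₖ B)ᴴ = Aᴴ ⊗ₖ Bᴴ := by
  ext ⟨i, j⟩ ⟨p, q⟩
  simp [conjTranspose_apply, kroneckerMap_apply]

lemma star_kron (A : Matrix k k ℂ) (B : Matrix l l ℂ) :
    star (A ⊗ₖ B) = star A ⊗ₖ star B := by
  simp only [star_eq_conjTranspose]
  exact conjTranspose_kron A B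

lemma kron_mem_unitaryGroup (u : Matrix.unitaryGroup k ℂ) (v : Matrix.unitaryGroup l ℂ) :
    (u : Matrix k k ℂ) ⊗ₖ (v : Matrix l l ℂ) ∈ Matrix.unitaryGroup (k × l) ℂ := by
  rw [Matrix.mem_unitaryGroup_iff']
  rw [star_kron, ← Matrix.mul_kronecker_mul,
    Unitary.star_mul_self_of_mem u.prop, Unitary.star_mul_self_of_mem v.prop,
    Matrix.one_kronecker_one]

lemma matRpow_eq (A : Matrix k k ℂ) (hA : A.IsHermitian) (r : ℝ) :
    matRpow A r = (hA.eigenvectorUnitary : Matrix k k ℂ) *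
      diagonal (RCLike.ofReal ∘ fun i => hA.eigenvalues i ^ r) *
      star (hA.eigenvectorUnitary : Matrix k k ℂ) := by
  rw [matRpow, hA.cfc_eq]
  rfl

lemma matRpow_posSemidef {A : Matrix k k ℂ} (hA : A.PosSemidef) (r : ℝ) :
    (matRpow A r).PosSemidef := by
  rw [matRpow_eq A hA.1 r, star_eq_conjTranspose]
  apply Matrix.PosSemidef.mul_mul_conjTranspose_same
  refine Matrix.posSemidef_diagonal_iff.mpr fun i => ?_
  exact RCLike.ofReal_nonneg.mpr (Real.rpow_nonneg (hA.eigenvalues_nonneg i) r)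

lemma matRpow_kronecker {A : Matrix k k ℂ} {B : Matrix l l ℂ}
    (hA : A.PosSemidef) (hB : B.PosSemidef) (r : ℝ) :
    matRpow (A ⊗ₖ B) r = matRpow A r ⊗ₖ matRpow B r := by
  have hA1 := hA.1
  have hB1 := hB.1
  set U := (hA1.eigenvectorUnitary : Matrix k k ℂ) with hU
  set V := (hB1.eigenvectorUnitary : Matrix l l ℂ) with hV
  let w : Matrix.unitaryGroup (k × l) ℂ := ⟨U ⊗ₖ V, kron_mem_unitaryGroup _ _⟩
  have hw : (w : Matrix (k × l) (k × l) ℂ) = U ⊗ₖ V := rfl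
  have hstar : (star (w : Matrix (k × l) (k × l) ℂ)) = star U ⊗ₖ star V := star_kron U V
  have hdiag : (diagonal (RCLike.ofReal ∘ hA1.eigenvalues) : Matrix k k ℂ) ⊗ₖ
      (diagonal (RCLike.ofReal ∘ hB1.eigenvalues) : Matrix l l ℂ)
      = diagonal (RCLike.ofReal ∘ fun p : k × l => hA1.eigenvalues p.1 * hB1.eigenvalues p.2) := by
    have h1 : (fun mn : k × l => ((RCLike.ofReal : ℝ → ℂ) ∘ hA1.eigenvalues) mn.1 *
        ((RCLike.ofReal : ℝ → ℂ) ∘ hB1.eigenvalues) mn.2)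
        = ((RCLike.ofReal : ℝ → ℂ) ∘ fun p : k × l => hA1.eigenvalues p.1 * hB1.eigenvalues p.2) := by
      funext p
      simp
    rw [Matrix.diagonal_kronecker_diagonal, h1]
  have hdecomp : A ⊗ₖ B = (w : Matrix (k × l) (k × l) ℂ) *
      diagonal (RCLike.ofReal ∘ fun p : k × l => hA1.eigenvalues p.1 * hB1.eigenvalues p.2) *
      (star (w : Matrix (k × l) (k × l) ℂ)) := by
    conv_lhs => rw [hA1.spectral_theorem, hB1.spectral_theorem, Unitary.conjStarAlgAut_apply,
      Unitary.conjStarAlgAut_apply]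
    rw [Matrix.mul_kronecker_mul, Matrix.mul_kronecker_mul, hdiag, hw, hstar]
  have hfun : ((RCLike.ofReal : ℝ → ℂ) ∘ (fun x : ℝ => x ^ r) ∘
        fun p : k × l => hA1.eigenvalues p.1 * hB1.eigenvalues p.2)
      = fun p : k × l => (RCLike.ofReal ∘ fun i => hA1.eigenvalues i ^ r) p.1 *
        (RCLike.ofReal ∘ fun i => hB1.eigenvalues i ^ r) p.2 := by
    funext p
    simp only [Function.comp_apply]
    rw [Real.mul_rpow (hA.eigenvalues_nonneg p.1) (hB.eigenvalues_nonneg p.2)]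
    push_cast
    ring
  rw [matRpow, hdecomp, cfc_conj_diag w _ _, hfun,
    matRpow_eq A hA1 r, matRpow_eq B hB1 r,
    Matrix.mul_kronecker_mul, Matrix.mul_kronecker_mul, Matrix.diagonal_kronecker_diagonal,
    hw, hstar]

end RenyiAux

/-- Multiplicativity of the α-z-Rényi quantity under Kronecker products, in the faithful
case (positive definite `σᵢ`), for any `α > 0`, `α ≠ 1` and `z > 0`. -/
theorem renyi_az_multiplicative_posDef {n m : ℕ}
    (σ₁ : Matrix (Fin n) (Fin n) ℂ) (σ₂ : Matrix (Fin m) (Fin m) ℂ)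
    (ρ₁ : Matrix (Fin n) (Fin n) ℂ) (ρ₂ : Matrix (Fin m) (Fin m) ℂ)
    (hσ₁ : σ₁.PosDef) (hσ₂ : σ₂.PosDef) (hρ₁ : ρ₁.PosSemidef) (hρ₂ : ρ₂.PosSemidef)
    (α z : ℝ) (hα₀ : 0 < α) (hα₁ : α ≠ 1) (hz : 0 < z) :
    (matRpow (matRpow (σ₁ ⊗ₖ σ₂) ((1 - α) / (2 * z)) * matRpow (ρ₁ ⊗ₖ ρ₂) (α / z)
        * matRpow (σ₁ ⊗ₖ σ₂) ((1 - α) / (2 * z))) z).trace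
      = (matRpow (matRpow σ₁ ((1 - α) / (2 * z)) * matRpow ρ₁ (α / z)
            * matRpow σ₁ ((1 - α) / (2 * z))) z).trace
        * (matRpow (matRpow σ₂ ((1 - α) / (2 * z)) * matRpow ρ₂ (α / z)
            * matRpow σ₂ ((1 - α) / (2 * z))) z).trace := by
  have hσ₁p := hσ₁.posSemidef
  have hσ₂p := hσ₂.posSemidef
  rw [RenyiAux.matRpow_kronecker hσ₁p hσ₂p, RenyiAux.matRpow_kronecker hρ₁ hρ₂,
    ← Matrix.mul_kronecker_mul, ← Matrix.mul_kronecker_mul]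
  have hX₁ := RenyiAux.matRpow_posSemidef hσ₁p ((1 - α) / (2 * z))
  have hX₂ := RenyiAux.matRpow_posSemidef hσ₂p ((1 - α) / (2 * z))
  have hM₁ : (matRpow σ₁ ((1 - α) / (2 * z)) * matRpow ρ₁ (α / z)
      * matRpow σ₁ ((1 - α) / (2 * z))).PosSemidef := by
    have h := (RenyiAux.matRpow_posSemidef hρ₁ (α / z)).mul_mul_conjTranspose_same
      (matRpow σ₁ ((1 - α) / (2 * z)))
    rwa [hX₁.1.eq] at h
  have hM₂ : (matRpow σ₂ ((1 - α) / (2 * z)) * matRpow ρ₂ (α / z)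
      * matRpow σ₂ ((1 - α) / (2 * z))).PosSemidef := by
    have h := (RenyiAux.matRpow_posSemidef hρ₂ (α / z)).mul_mul_conjTranspose_same
      (matRpow σ₂ ((1 - α) / (2 * z)))
    rwa [hX₂.1.eq] at h
  rw [RenyiAux.matRpow_kronecker hM₁ hM₂, Matrix.trace_kronecker]
end

section
/- Let h₁ be an n×n and h₂ an m×m complex positive definite matrix, let x₁, x₂ be matrices of matching sizes, and let s, t ≥ 0 be real numbers. Then ((h₁ ⊗ₖ h₂)^{s}) · (x₁ ⊗ₖ x₂) · ((h₁ ⊗ₖ h₂)^{t}) = (h₁^{s} · x₁ · h₁^{t}) ⊗ₖ (h₂^{s} · x₂ · h₂^{t}), and for every real p > 0, trace(|(h₁ ⊗ₖ h₂)^{s} (x₁ ⊗ₖ x₂) (h₁ ⊗ₖ h₂)^{t}|^p) = trace(|h₁^{s} x₁ h₁^{t}|^p) · trace(|h₂^{s} x₂ h₂^{t}|^p). -/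
set_option maxHeartbeats 1000000

open Matrix Kronecker ComplexOrder

section Aux

variable {k l : Type*} [Fintype k] [DecidableEq k] [Fintype l] [DecidableEq l]

lemma spectrumRealDiagonal (d : k → ℝ) :
    spectrum ℝ (Matrix.diagonal ((↑) ∘ d : k → ℂ)) = Set.range d := by
  ext x
  rw [← spectrum.algebraMap_mem_iff ℂ, spectrum_diagonal]
  simp [Function.comp, eq_comm]

omit [Fintype k] in
lemma isSelfAdjointRealDiagonal (d : k → ℝ) :
    _root_.IsSelfAdjoint (Matrix.diagonal ((↑) ∘ d : k → ℂ)) := by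
  rw [_root_.IsSelfAdjoint, Matrix.star_eq_conjTranspose]
  ext i j
  by_cases h : i = j
  · subst h; simp
  · simp [Matrix.conjTranspose_apply, Matrix.diagonal_apply_ne, h, Ne.symm h]

/-- cfc of a real diagonal matrix is entrywise. -/
lemma cfcDiagonal (d : k → ℝ) (f : ℝ → ℝ) :
    cfc f (Matrix.diagonal ((↑) ∘ d : k → ℂ)) = Matrix.diagonal ((↑) ∘ f ∘ d : k → ℂ) := by
  have hsa := isSelfAdjointRealDiagonal d
  have hmem : ∀ i, d i ∈ spectrum ℝ (Matrix.diagonal ((↑) ∘ d : k → ℂ)) := by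
    intro i; rw [spectrumRealDiagonal]; exact ⟨i, rfl⟩
  set e : k → spectrum ℝ (Matrix.diagonal ((↑) ∘ d : k → ℂ)) := fun i => ⟨d i, hmem i⟩ with he
  set F : C(spectrum ℝ (Matrix.diagonal ((↑) ∘ d : k → ℂ)), ℝ) → Matrix k k ℂ :=
    fun g => Matrix.diagonal ((↑) ∘ g ∘ e : k → ℂ) with hF
  have hcontF : Continuous F := by
    apply continuous_matrix
    intro i j
    by_cases h : i = j
    · subst h
      simp only [hF, Matrix.diagonal_apply_eq, Function.comp_apply]
      exact Complex.continuous_ofReal.comp (ContinuousEvalConst.continuous_eval_const (e i))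
    · simp only [hF, Matrix.diagonal_apply_ne _ h]
      exact continuous_const
  let Φ : C(spectrum ℝ (Matrix.diagonal ((↑) ∘ d : k → ℂ)), ℝ) →⋆ₐ[ℝ] Matrix k k ℂ :=
  { toFun := F
    map_one' := by
      ext i j
      by_cases h : i = j <;> simp [hF, Matrix.diagonal_apply, Matrix.one_apply, h]
    map_mul' := fun f g => by
      simp only [hF]
      rw [Matrix.diagonal_mul_diagonal]
      ext i j
      by_cases h : i = j <;> simp [Matrix.diagonal_apply, h]
    map_zero' := by
      ext i j
      by_cases h : i = j <;> simp [hF, Matrix.diagonal_apply, h]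
    map_add' := fun f g => by
      simp only [hF]
      ext i j
      by_cases h : i = j <;> simp [Matrix.diagonal_apply, Matrix.add_apply, h]
    commutes' := fun r => by
      simp only [hF]
      rw [Matrix.algebraMap_eq_diagonal]
      ext i j
      by_cases h : i = j <;> simp [Matrix.diagonal_apply, h]
    map_star' := fun g => by
      simp only [hF]
      rw [Matrix.star_eq_conjTranspose, Matrix.diagonal_conjTranspose]
      ext i j
      by_cases h : i = j <;> simp [Matrix.diagonal_apply, Pi.star_def, h] }
  have hcont : Continuous Φ := hcontF
  have hid : Φ (ContinuousMap.restrict _ (ContinuousMap.id ℝ)) =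
      Matrix.diagonal ((↑) ∘ d : k → ℂ) := by
    show F _ = _
    simp only [hF]
    ext i j
    by_cases h : i = j <;> simp [Matrix.diagonal_apply, h, he]
  have key := cfcHom_eq_of_continuous_of_map_id hsa Φ hcont hid
  have hfc : ContinuousOn f (spectrum ℝ (Matrix.diagonal ((↑) ∘ d : k → ℂ))) := by
    rw [continuousOn_iff_continuous_restrict]; fun_prop
  rw [cfc_apply f _ hsa hfc, key]
  show F _ = _
  simp only [hF]
  ext i j
  by_cases h : i = j <;> simp [Matrix.diagonal_apply, h, he]

/-- Conjugation by a unitary matrix as a star algebra homomorphism. -/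
noncomputable def unitaryConjHom (U : Matrix k k ℂ) (hU : U ∈ unitary (Matrix k k ℂ)) :
    Matrix k k ℂ →⋆ₐ[ℂ] Matrix k k ℂ where
  toFun M := U * M * star U
  map_one' := by
    show U * 1 * star U = 1
    rw [mul_one, Unitary.mul_star_self_of_mem hU]
  map_mul' M N := by
    have h1 : star U * U = 1 := Unitary.star_mul_self_of_mem hU
    show U * (M * N) * star U = U * M * star U * (U * N * star U)
    simp only [mul_assoc]
    rw [← mul_assoc (star U) U (N * star U), h1, one_mul]
  map_zero' := by show U * 0 * star U = 0; simp
  map_add' M N := by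
    show U * (M + N) * star U = U * M * star U + U * N * star U
    rw [mul_add, add_mul]
  commutes' c := by
    show U * algebraMap ℂ _ c * star U = algebraMap ℂ _ c
    simp only [Algebra.algebraMap_eq_smul_one, mul_smul_comm, smul_mul_assoc, mul_one,
      Unitary.mul_star_self_of_mem hU]
  map_star' M := by
    show U * star M * star U = star (U * M * star U)
    simp only [StarMul.star_mul, star_star, mul_assoc]

lemma cfc_unitary_conj (U : Matrix k k ℂ) (hU : U ∈ unitary (Matrix k k ℂ))
    (M : Matrix k k ℂ) (hM : _root_.IsSelfAdjoint M) (f : ℝ → ℝ) :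
    cfc f (U * M * star U) = U * cfc f M * star U := by
  have hsa : _root_.IsSelfAdjoint (U * M * star U) := by
    rw [_root_.IsSelfAdjoint]
    simp only [StarMul.star_mul, star_star, hM.star_eq, mul_assoc]
  have hcontf : ContinuousOn f (spectrum ℝ M) := by
    rw [continuousOn_iff_continuous_restrict]; fun_prop
  have hcontφ : Continuous (unitaryConjHom U hU) := by
    show Continuous fun M => U * M * star U
    fun_prop
  exact (StarAlgHom.map_cfc (unitaryConjHom U hU) f M hcontf hcontφ hM hsa).symm

omit [Fintype k] [DecidableEq k] [Fintype l] [DecidableEq l] in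
lemma kroneckerConjTranspose (A : Matrix k k ℂ) (B : Matrix l l ℂ) :
    (A ⊗ₖ B)ᴴ = Aᴴ ⊗ₖ Bᴴ := by
  ext ⟨i, j⟩ ⟨p, q⟩
  simp [Matrix.conjTranspose_apply, mul_comm]

lemma kroneckerUnitary {U₁ : Matrix k k ℂ} {U₂ : Matrix l l ℂ}
    (h₁ : U₁ ∈ unitary (Matrix k k ℂ)) (h₂ : U₂ ∈ unitary (Matrix l l ℂ)) :
    U₁ ⊗ₖ U₂ ∈ unitary (Matrix (k × l) (k × l) ℂ) := by
  rw [Unitary.mem_iff] at h₁ h₂ ⊢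
  rw [Matrix.star_eq_conjTranspose, kroneckerConjTranspose, ← Matrix.mul_kronecker_mul,
    ← Matrix.mul_kronecker_mul, ← Matrix.star_eq_conjTranspose U₁,
    ← Matrix.star_eq_conjTranspose U₂, h₁.1, h₁.2, h₂.1, h₂.2,
    Matrix.one_kronecker_one]
  exact ⟨rfl, rfl⟩

lemma cfc_eigen (A : Matrix k k ℂ) (hA : A.IsHermitian) (f : ℝ → ℝ) :
    cfc f A = (Matrix.IsHermitian.eigenvectorUnitary hA : Matrix k k ℂ)
      * Matrix.diagonal ((↑) ∘ f ∘ hA.eigenvalues : k → ℂ)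
      * star (Matrix.IsHermitian.eigenvectorUnitary hA : Matrix k k ℂ) := by
  rw [Matrix.IsHermitian.cfc_eq hA, Matrix.IsHermitian.cfc]
  rfl

lemma matRpow_kronecker {A : Matrix k k ℂ} {B : Matrix l l ℂ}
    (hA : A.PosSemidef) (hB : B.PosSemidef) (r : ℝ) :
    matRpow (A ⊗ₖ B) r = matRpow A r ⊗ₖ matRpow B r := by
  have hA' := hA.isHermitian
  have hB' := hB.isHermitian
  set d₁ := hA'.eigenvalues with hd₁
  set d₂ := hB'.eigenvalues with hd₂
  set U₁ : Matrix k k ℂ := (Matrix.IsHermitian.eigenvectorUnitary hA' : Matrix k k ℂ) with hU₁def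
  set U₂ : Matrix l l ℂ := (Matrix.IsHermitian.eigenvectorUnitary hB' : Matrix l l ℂ) with hU₂def
  have hU₁ : U₁ ∈ unitary (Matrix k k ℂ) := (Matrix.IsHermitian.eigenvectorUnitary hA').prop
  have hU₂ : U₂ ∈ unitary (Matrix l l ℂ) := (Matrix.IsHermitian.eigenvectorUnitary hB').prop
  have hU : U₁ ⊗ₖ U₂ ∈ unitary (Matrix (k × l) (k × l) ℂ) := kroneckerUnitary hU₁ hU₂
  have specA : A = U₁ * Matrix.diagonal ((↑) ∘ d₁ : k → ℂ) * star U₁ := hA'.spectral_theorem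
  have specB : B = U₂ * Matrix.diagonal ((↑) ∘ d₂ : l → ℂ) * star U₂ := hB'.spectral_theorem
  have hDkron : ∀ (e₁ : k → ℝ) (e₂ : l → ℝ),
      (Matrix.diagonal ((↑) ∘ e₁ : k → ℂ)) ⊗ₖ (Matrix.diagonal ((↑) ∘ e₂ : l → ℂ))
      = Matrix.diagonal ((↑) ∘ (fun p : k × l => e₁ p.1 * e₂ p.2)) := by
    intro e₁ e₂
    rw [Matrix.diagonal_kronecker_diagonal]
    refine congrArg Matrix.diagonal ?_
    funext p
    simp
  have hstar : star (U₁ ⊗ₖ U₂) = star U₁ ⊗ₖ star U₂ := by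
    rw [Matrix.star_eq_conjTranspose, kroneckerConjTranspose]; rfl
  have hAB : A ⊗ₖ B = (U₁ ⊗ₖ U₂)
      * Matrix.diagonal ((↑) ∘ (fun p : k × l => d₁ p.1 * d₂ p.2))
      * star (U₁ ⊗ₖ U₂) := by
    rw [← hDkron, hstar, ← Matrix.mul_kronecker_mul, ← Matrix.mul_kronecker_mul,
      ← specA, ← specB]
  have hmul : ((fun x : ℝ => x ^ r) ∘ fun p : k × l => d₁ p.1 * d₂ p.2)
      = fun p : k × l => (d₁ p.1 ^ r) * (d₂ p.2 ^ r) := by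
    ext p
    exact Real.mul_rpow (hA.eigenvalues_nonneg p.1) (hB.eigenvalues_nonneg p.2)
  rw [matRpow, hAB, cfc_unitary_conj _ hU _ (isSelfAdjointRealDiagonal _),
    cfcDiagonal, hmul]
  have hsplit : (Matrix.diagonal ((↑) ∘ fun p : k × l => (d₁ p.1 ^ r) * (d₂ p.2 ^ r)))
      = (Matrix.diagonal ((↑) ∘ fun i => d₁ i ^ r : k → ℂ))
        ⊗ₖ (Matrix.diagonal ((↑) ∘ fun j => d₂ j ^ r : l → ℂ)) := by
    rw [hDkron]
  rw [hsplit, hstar, ← Matrix.mul_kronecker_mul, ← Matrix.mul_kronecker_mul,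
    matRpow, matRpow, cfc_eigen A hA', cfc_eigen B hB']
  rfl

lemma matRpow_posSemidef {A : Matrix k k ℂ} (hA : A.PosSemidef) (r : ℝ) :
    (matRpow A r).PosSemidef := by
  rw [matRpow, cfc_eigen A hA.isHermitian, Matrix.star_eq_conjTranspose]
  apply Matrix.PosSemidef.mul_mul_conjTranspose_same
  refine Matrix.posSemidef_diagonal_iff.mpr fun i => ?_
  exact Complex.zero_le_real.mpr (Real.rpow_nonneg (hA.eigenvalues_nonneg i) r)

lemma matAbs_posSemidef (A : Matrix k k ℂ) : (matAbs A).PosSemidef :=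
  matRpow_posSemidef (Matrix.posSemidef_conjTranspose_mul_self A) _

lemma matAbs_kronecker_s14 (X : Matrix k k ℂ) (Y : Matrix l l ℂ) :
    matAbs (X ⊗ₖ Y) = matAbs X ⊗ₖ matAbs Y := by
  rw [matAbs, kroneckerConjTranspose, ← Matrix.mul_kronecker_mul]
  exact matRpow_kronecker (Matrix.posSemidef_conjTranspose_mul_self X)
    (Matrix.posSemidef_conjTranspose_mul_self Y) _

end Aux

/-- The computational core of the multiplicativity of the Kosaki `L^p`-norm: for positive
definite `h₁, h₂`, arbitrary `x₁, x₂` and reals `s, t ≥ 0`, the two-sided multiplication by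
powers of `h₁ ⊗ₖ h₂` factorizes as a Kronecker product, and the Schatten trace quantities
are multiplicative for every `p > 0`. -/
theorem kosaki_core_multiplicative {n m : ℕ}
    (h₁ : Matrix (Fin n) (Fin n) ℂ) (h₂ : Matrix (Fin m) (Fin m) ℂ)
    (x₁ : Matrix (Fin n) (Fin n) ℂ) (x₂ : Matrix (Fin m) (Fin m) ℂ)
    (hh₁ : h₁.PosDef) (hh₂ : h₂.PosDef) (s t : ℝ) (hs : 0 ≤ s) (ht : 0 ≤ t) :
    matRpow (h₁ ⊗ₖ h₂) s * (x₁ ⊗ₖ x₂) * matRpow (h₁ ⊗ₖ h₂) t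
      = (matRpow h₁ s * x₁ * matRpow h₁ t) ⊗ₖ (matRpow h₂ s * x₂ * matRpow h₂ t) ∧
    ∀ p : ℝ, 0 < p →
      (matRpow (matAbs (matRpow (h₁ ⊗ₖ h₂) s * (x₁ ⊗ₖ x₂) * matRpow (h₁ ⊗ₖ h₂) t)) p).trace
        = (matRpow (matAbs (matRpow h₁ s * x₁ * matRpow h₁ t)) p).trace
          * (matRpow (matAbs (matRpow h₂ s * x₂ * matRpow h₂ t)) p).trace := by
  have key : matRpow (h₁ ⊗ₖ h₂) s * (x₁ ⊗ₖ x₂) * matRpow (h₁ ⊗ₖ h₂) t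
      = (matRpow h₁ s * x₁ * matRpow h₁ t) ⊗ₖ (matRpow h₂ s * x₂ * matRpow h₂ t) := by
    rw [matRpow_kronecker hh₁.posSemidef hh₂.posSemidef s,
      matRpow_kronecker hh₁.posSemidef hh₂.posSemidef t,
      ← Matrix.mul_kronecker_mul, ← Matrix.mul_kronecker_mul]
  refine ⟨key, fun p hp => ?_⟩
  rw [key, matAbs_kronecker_s14,
    matRpow_kronecker (matAbs_posSemidef _) (matAbs_posSemidef _) p,
    Matrix.trace_kronecker]
end
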